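/- With U_k := the upward closure (in (ℕ^d, ≤ componentwise)) of χ(T(Δ^{≤k})) ∪ V₀, where V₀ is the set of vectors whose last two components are (N+1, 0) or (0, N+1), it holds that U_k ∩ χ(𝔽) = χ(T(Δ^{≤k})), where χ(𝔽) denotes the image of all transfer flows. -/

import Mathlib

/-- ℕ extended with an extra element `#` (represented by `none`),
which is an identity for addition and incomparable with integers. -/
abbrev NS := Option ℕ

def NS.sharp : NS := none

def NS.add : NS → NS → NS
  | none, x => x
  | some a, none => some a
  | some a, some b => some (a + b)

instance : Add NS := ⟨NS.add⟩
instance : Zero NS := ⟨none⟩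

instance : AddCommMonoid NS where
  add_assoc a b c := by
    show NS.add (NS.add a b) c = NS.add a (NS.add b c)
    cases a <;> cases b <;> cases c <;> simp [NS.add, Nat.add_assoc]
  zero_add a := by cases a <;> rfl
  add_zero a := by cases a <;> rfl
  add_comm a b := by
    show NS.add a b = NS.add b a
    cases a <;> cases b <;> simp [NS.add, Nat.add_comm]
  nsmul := nsmulRec

/-- The order on `NS`: `#` is only comparable with `#`. -/
def NS.le : NS → NS → Prop
  | none, none => True
  | some a, some b => a ≤ b
  | _, _ => False

def NS.lt (x y : NS) : Prop := NS.le x y ∧ x ≠ y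

/-- A transfer flow: an agent part `f` and a control part `(src, dst)`. -/
structure TF (Q L : Type) where
  f : Q → Q → NS
  src : L
  dst : L

/-- The order `⪯` on transfer flows. -/
def TF.le {Q L : Type} (t1 t2 : TF Q L) : Prop :=
  t1.src = t2.src ∧ t1.dst = t2.dst ∧ ∀ q q', NS.le (t1.f q q') (t2.f q q')

/-- The product `tf1 ⊗ tf2` of two transfer flows. -/
def TF.prod {Q L : Type} [Fintype Q] (t1 t2 : TF Q L) : Set (TF Q L) :=
  { t | t1.dst = t2.src ∧ t.src = t1.src ∧ t.dst = t2.dst ∧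
    ∃ H : Q → Q → Q → NS,
      (∀ q1 q3, (∑ q2, H q1 q2 q3) = t.f q1 q3) ∧
      (∀ q1 q2, NS.le (t1.f q1 q2) (∑ q3, H q1 q2 q3)) ∧
      (∀ q2 q3, NS.le (t2.f q2 q3) (∑ q1, H q1 q2 q3)) }

/-- The weight of a transfer flow: `#` contributes nothing. -/
def TF.weight {Q L : Type} [Fintype Q] (t : TF Q L) : ℕ :=
  ∑ q, ∑ q', (t.f q q').getD 0

/-- Minimality with respect to `⪯` within a set of transfer flows. -/
def MinimalIn {Q L : Type} (S : Set (TF Q L)) (t : TF Q L) : Prop :=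
  t ∈ S ∧ ∀ t' ∈ S, TF.le t' t → t' = t
/-- An immediate observation transition `(q1, q2) → (q1, q3)`, written
`q2 --q1--> q3`: an agent in `src` observes an agent in `obs` and moves
to `dst`. -/
structure IOTrans (Q : Type) where
  obs : Q
  src : Q
  dst : Q

/-- One step of the protocol using transition `t = (q1,q2) → (q1,q3)`:
one agent moves from `t.src` to `t.dst` while observing an agent in `t.obs`. -/
def ProtStep {Q : Type} [DecidableEq Q] (t : IOTrans Q) (γ γ' : Q → ℕ) : Prop :=
  1 ≤ γ t.obs ∧ 1 ≤ γ t.src ∧ (t.obs = t.src → 2 ≤ γ t.obs) ∧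
  ∀ q, γ' q = γ q - (if q = t.src then 1 else 0) + (if q = t.dst then 1 else 0)

/-- `c1 →tf c2`: a step from configuration `c1` to `c2` following a
transfer flow `tf`, via a step witness `g ≥ f`. -/
def FlowStep {Q L : Type} [Fintype Q] (tf : TF Q L) (c1 c2 : (Q → ℕ) × L) : Prop :=
  c1.2 = tf.src ∧ c2.2 = tf.dst ∧
  ∃ g : Q → Q → NS,
    (∀ q q', NS.le (tf.f q q') (g q q')) ∧
    (∀ q, (some (c1.1 q) : NS) = ∑ q', g q q') ∧
    (∀ q, (some (c2.1 q) : NS) = ∑ q', g q' q)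

/-- The set `T(t)` of transfer flows associated with a transition
`t = (q1,q2) → (q1,q3)` of the IOPP, where `Tr` is the transition function of
the deterministic Rabin automaton. -/
def Tset {Q L : Type} [DecidableEq Q] (Tr : L → IOTrans Q → L) (t : IOTrans Q) :
    Set (TF Q L) :=
  { tf | Tr tf.src t = tf.dst ∧
    ((t.obs ≠ t.src ∨ t.obs ≠ t.dst) →
      NS.le (some 1) (tf.f t.obs t.obs) ∧ NS.le (some 1) (tf.f t.src t.dst)) ∧
    ((t.obs = t.src ∧ t.obs = t.dst) → NS.le (some 2) (tf.f t.obs t.obs)) ∧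
    (∀ q, q ≠ t.obs → (q, q) ≠ (t.src, t.dst) → NS.le (some 0) (tf.f q q)) ∧
    (∀ q q', q ≠ q' → (q, q') ≠ (t.src, t.dst) → tf.f q q' = NS.sharp) }

/-- The product extended to sets of transfer flows. -/
def setProd {Q L : Type} [Fintype Q] (F F' : Set (TF Q L)) : Set (TF Q L) :=
  ⋃ t1 ∈ F, ⋃ t2 ∈ F', TF.prod t1 t2

/-- `T(ε)`: transfer flows of the empty sequence. -/
def Teps {Q L : Type} : Set (TF Q L) :=
  { tf | tf.src = tf.dst ∧ (∀ q, tf.f q q ≠ NS.sharp) ∧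
    ∀ q q', q ≠ q' → tf.f q q' = NS.sharp }

/-- `T(w)` for a word `w = t1 … tk`: the product `T(t1) ⊗ … ⊗ T(tk)`. -/
def Tword {Q L : Type} [Fintype Q] [DecidableEq Q] (Tr : L → IOTrans Q → L) :
    List (IOTrans Q) → Set (TF Q L)
  | [] => Teps
  | t :: w => setProd (Tset Tr t) (Tword Tr w)

/-- `T(Δ^{≤k})`: transfer flows of sequences of at most `k` transitions. -/
def TBounded {Q L : Type} [Fintype Q] [DecidableEq Q] (Tr : L → IOTrans Q → L)
    (k : ℕ) : Set (TF Q L) :=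
  ⋃ w ∈ { w : List (IOTrans Q) | w.length ≤ k }, Tword Tr w

/-- `T(Δ^*)`: transfer flows of all finite sequences of transitions. -/
def TStar {Q L : Type} [Fintype Q] [DecidableEq Q] (Tr : L → IOTrans Q → L) :
    Set (TF Q L) :=
  ⋃ w : List (IOTrans Q), Tword Tr w

/-- Vectors of `ℕ^d` with `d = |Q|² + 2`: one coordinate per pair of states,
plus two extra coordinates. -/
abbrev Vec (Q : Type) := ((Q × Q) ⊕ Fin 2) → ℕ

/-- `N = |L|² · 2^{|Q|²}`. -/
def Ncard (Q L : Type) [Fintype Q] [Fintype L] : ℕ :=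
  (Fintype.card L) ^ 2 * 2 ^ ((Fintype.card Q) ^ 2)

/-- The set `S` of `#`-positions of an agent part. -/
def sharpPos {Q : Type} (f : Q → Q → NS) : Q → Q → Bool :=
  fun q q' => (f q q').isNone

/-- The encoding `χ` of a transfer flow into sets of vectors of `ℕ^d`, given a
map `θ` from pairs of control locations and `#`-position sets to `{1,…,N}`:
coordinates at pairs `(q,q')` with `f(q,q') ≠ #` carry `f(q,q')`, the other
such coordinates are unconstrained, and the two last coordinates are
`θ(ℓ,ℓ',S)` and `N + 1 − θ(ℓ,ℓ',S)`. -/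
def chi {Q L : Type} (N : ℕ) (θ : L × L × (Q → Q → Bool) → ℕ) (tf : TF Q L) :
    Set (Vec Q) :=
  { v | (∀ q q' n, tf.f q q' = some n → v (Sum.inl (q, q')) = n) ∧
    v (Sum.inr 0) = θ (tf.src, tf.dst, sharpPos tf.f) ∧
    v (Sum.inr 1) = N + 1 - θ (tf.src, tf.dst, sharpPos tf.f) }

/-- The image of a set of transfer flows under the encoding `χ`. -/
def chiSet {Q L : Type} (N : ℕ) (θ : L × L × (Q → Q → Bool) → ℕ)
    (F : Set (TF Q L)) : Set (Vec Q) :=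
  ⋃ tf ∈ F, chi N θ tf

/-- `V₀`: vectors whose last two components are `(N+1, 0)` or `(0, N+1)`. -/
def V0 {Q : Type} (N : ℕ) : Set (Vec Q) :=
  { v | (v (Sum.inr 0) = N + 1 ∧ v (Sum.inr 1) = 0) ∨
        (v (Sum.inr 0) = 0 ∧ v (Sum.inr 1) = N + 1) }

/-- Upward closure with respect to the componentwise order on `ℕ^d`. -/
def upClosure {Q : Type} (A : Set (Vec Q)) : Set (Vec Q) :=
  { v | ∃ u ∈ A, ∀ i, u i ≤ v i }

/-- `U_k`: the upward closure of `χ(T(Δ^{≤k})) ∪ V₀`. -/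
def Uset {Q L : Type} [Fintype Q] [DecidableEq Q] (N : ℕ)
    (θ : L × L × (Q → Q → Bool) → ℕ) (Tr : L → IOTrans Q → L) (k : ℕ) :
    Set (Vec Q) :=
  upClosure (chiSet N θ (TBounded Tr k) ∪ V0 N)

/- ### Auxiliary lemmas -/

lemma NS.le_refl' (x : NS) : NS.le x x := by cases x <;> simp [NS.le]

lemma NS.le_trans' {x y z : NS} (h1 : NS.le x y) (h2 : NS.le y z) : NS.le x z := by
  cases x <;> cases y <;> cases z <;> simp_all [NS.le] <;> omega

lemma NS.le_none' {x : NS} (h : NS.le none x) : x = none := by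
  cases x <;> simp_all [NS.le]

lemma NS.some_le' {n : ℕ} {x : NS} (h : NS.le (some n) x) :
    ∃ m, x = some m ∧ n ≤ m := by
  cases x <;> simp_all [NS.le]

lemma NS.add_le_add' {a b c d : NS} (h1 : NS.le a b) (h2 : NS.le c d) :
    NS.le (a + c) (b + d) := by
  show NS.le (NS.add a c) (NS.add b d)
  cases a <;> cases b <;> cases c <;> cases d <;>
    simp_all [NS.le, NS.add] <;> omega

lemma NS.sum_le_sum' {ι : Type*} (s : Finset ι) (f g : ι → NS)
    (h : ∀ i ∈ s, NS.le (f i) (g i)) :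
    NS.le (∑ i ∈ s, f i) (∑ i ∈ s, g i) := by
  classical
  induction s using Finset.induction with
  | empty => simp; exact NS.le_refl' _
  | insert _ _ hnot ih =>
    rw [Finset.sum_insert hnot, Finset.sum_insert hnot]
    exact NS.add_le_add' (h _ (Finset.mem_insert_self _ _))
      (ih fun i hi => h i (Finset.mem_insert_of_mem hi))

lemma NS.add_eq_none' {x y : NS} : x + y = none ↔ x = none ∧ y = none := by
  show NS.add x y = none ↔ _
  cases x <;> cases y <;> simp [NS.add]

lemma NS.add_none (x : NS) : x + none = x := by
  show NS.add x none = x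
  cases x <;> rfl

lemma NS.sum_eq_none' {ι : Type*} {s : Finset ι} {f : ι → NS} :
    (∑ i ∈ s, f i) = none ↔ ∀ i ∈ s, f i = none := by
  classical
  induction s using Finset.induction with
  | empty => simp; rfl
  | insert _ _ hnot ih =>
    rw [Finset.sum_insert hnot]
    rw [NS.add_eq_none', ih]
    simp [hnot]

lemma prod_upward {Q L : Type} [Fintype Q] {t1 t2 tf tf' : TF Q L}
    (h : tf ∈ TF.prod t1 t2) (hle : TF.le tf tf') : tf' ∈ TF.prod t1 t2 := by
  classical
  obtain ⟨h12, hsrc, hdst, H, hsum, h1, h2⟩ := h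
  obtain ⟨hs, hd, hf⟩ := hle
  refine ⟨h12, hs.symm.trans hsrc, hd.symm.trans hdst, ?_⟩
  have key : ∀ q1 q3, ∃ G : Q → NS,
      (∀ q2, NS.le (H q1 q2 q3) (G q2)) ∧ (∑ q2, G q2) = tf'.f q1 q3 := by
    intro q1 q3
    have hf13 := hf q1 q3
    cases hfv : tf.f q1 q3 with
    | none =>
      rw [hfv] at hf13
      have hnone := NS.le_none' hf13
      exact ⟨fun q2 => H q1 q2 q3, fun q2 => NS.le_refl' _,
        by rw [hsum q1 q3, hfv, hnone]⟩
    | some n =>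
      rw [hfv] at hf13
      obtain ⟨m, hm, hnm⟩ := NS.some_le' hf13
      have hex : ∃ q2, H q1 q2 q3 ≠ none := by
        by_contra hc
        push_neg at hc
        have : (∑ q2, H q1 q2 q3) = none := NS.sum_eq_none'.mpr fun i _ => hc i
        rw [hsum q1 q3, hfv] at this
        exact Option.some_ne_none n this
      obtain ⟨q2s, hq2s⟩ := hex
      refine ⟨fun q2 => H q1 q2 q3 + (if q2 = q2s then some (m - n) else (0 : NS)),
        ?_, ?_⟩
      · intro q2
        by_cases hq : q2 = q2s
        · subst hq
          obtain ⟨a, ha⟩ := Option.ne_none_iff_exists'.mp hq2s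
          simp only [if_pos rfl, ha]
          show NS.le (some a) (NS.add (some a) (some (m - n)))
          simp [NS.add, NS.le]
        · simp only [if_neg hq]
          rw [show ((0:NS) = none) from rfl, NS.add_none]
          exact NS.le_refl' _
      · rw [Finset.sum_add_distrib, hsum q1 q3, hfv, hm]
        rw [Finset.sum_ite_eq' Finset.univ q2s (fun _ => (some (m - n) : NS))]
        simp only [Finset.mem_univ, if_pos]
        show NS.add (some n) (some (m - n)) = some m
        simp [NS.add]
        omega
  choose G hG1 hG2 using key
  refine ⟨fun q1 q2 q3 => G q1 q3 q2, fun q1 q3 => hG2 q1 q3, ?_, ?_⟩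
  · intro q1 q2
    exact NS.le_trans' (h1 q1 q2)
      (NS.sum_le_sum' _ _ _ fun q3 _ => hG1 q1 q3 q2)
  · intro q2 q3
    exact NS.le_trans' (h2 q2 q3)
      (NS.sum_le_sum' _ _ _ fun q1 _ => hG1 q1 q3 q2)

lemma Teps_upward {Q L : Type} {tf tf' : TF Q L}
    (h : tf ∈ Teps) (hle : TF.le tf tf') : tf' ∈ Teps := by
  obtain ⟨h1, h2, h3⟩ := h
  obtain ⟨hs, hd, hf⟩ := hle
  refine ⟨hs.symm.trans (h1.trans hd), ?_, ?_⟩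
  · intro q
    have := hf q q
    cases hfv : tf.f q q with
    | none => exact absurd hfv (h2 q)
    | some n =>
      rw [hfv] at this
      obtain ⟨m, hm, _⟩ := NS.some_le' this
      rw [hm]
      exact Option.some_ne_none m
  · intro q q' hqq
    have := hf q q'
    rw [h3 q q' hqq] at this
    exact NS.le_none' this

lemma Tword_upward {Q L : Type} [Fintype Q] [DecidableEq Q]
    (Tr : L → IOTrans Q → L) (w : List (IOTrans Q)) {tf tf' : TF Q L}
    (h : tf ∈ Tword Tr w) (hle : TF.le tf tf') : tf' ∈ Tword Tr w := by
  cases w with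
  | nil => exact Teps_upward h hle
  | cons t w =>
    simp only [Tword, setProd, Set.mem_iUnion] at h ⊢
    obtain ⟨t1, ht1, t2, ht2, hp⟩ := h
    exact ⟨t1, ht1, t2, ht2, prod_upward hp hle⟩

lemma TBounded_upward {Q L : Type} [Fintype Q] [DecidableEq Q]
    (Tr : L → IOTrans Q → L) (k : ℕ) {tf tf' : TF Q L}
    (h : tf ∈ TBounded Tr k) (hle : TF.le tf tf') : tf' ∈ TBounded Tr k := by
  simp only [TBounded, Set.mem_iUnion] at h ⊢
  obtain ⟨w, hw, hmem⟩ := h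
  exact ⟨w, hw, Tword_upward Tr w hmem hle⟩

/-- `U_k ∩ χ(𝔽) = χ(T(Δ^{≤k}))`: among vectors encoding transfer flows, those
in `U_k` are exactly the encodings of transfer flows of `T(Δ^{≤k})`. -/
theorem Uset_inter_chi {Q L : Type} [Fintype Q] [Fintype L] [DecidableEq Q]
    (θ : L × L × (Q → Q → Bool) → ℕ)
    (hθ : Set.BijOn θ Set.univ (Set.Icc 1 (Ncard Q L)))
    (Tr : L → IOTrans Q → L) (k : ℕ) :
    Uset (Ncard Q L) θ Tr k ∩ chiSet (Ncard Q L) θ (Set.univ : Set (TF Q L)) =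
      chiSet (Ncard Q L) θ (TBounded Tr k) := by
  set N := Ncard Q L with hN
  have hθmem : ∀ x, 1 ≤ θ x ∧ θ x ≤ N := by
    intro x
    have := hθ.mapsTo (Set.mem_univ x)
    exact ⟨this.1, this.2⟩
  ext v
  constructor
  · rintro ⟨⟨u, hu, hle⟩, hv⟩
    simp only [chiSet, Set.mem_iUnion] at hv
    obtain ⟨tf', -, hvchi⟩ := hv
    obtain ⟨hv1, hv2, hv3⟩ := hvchi
    cases hu with
    | inr huV0 =>
      exfalso
      have hb := hθmem (tf'.src, tf'.dst, sharpPos tf'.f)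
      cases huV0 with
      | inl hcase =>
        have := hle (Sum.inr 0)
        rw [hcase.1, hv2] at this
        omega
      | inr hcase =>
        have := hle (Sum.inr 1)
        rw [hcase.2, hv3] at this
        omega
    | inl huchi =>
      simp only [chiSet, Set.mem_iUnion] at huchi
      obtain ⟨tf, htf, hu1, hu2, hu3⟩ := huchi
      -- the θ-values coincide
      have hb := hθmem (tf.src, tf.dst, sharpPos tf.f)
      have hb' := hθmem (tf'.src, tf'.dst, sharpPos tf'.f)
      have hle0 := hle (Sum.inr 0)
      have hle1 := hle (Sum.inr 1)
      rw [hu2, hv2] at hle0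
      rw [hu3, hv3] at hle1
      have hθeq : θ (tf.src, tf.dst, sharpPos tf.f)
          = θ (tf'.src, tf'.dst, sharpPos tf'.f) := by omega
      have htriple : (tf.src, tf.dst, sharpPos tf.f)
          = (tf'.src, tf'.dst, sharpPos tf'.f) :=
        hθ.injOn (Set.mem_univ _) (Set.mem_univ _) hθeq
      have hsrc : tf.src = tf'.src := congrArg Prod.fst htriple
      have hdst : tf.dst = tf'.dst := congrArg (fun p => p.2.1) htriple
      have hsharp : sharpPos tf.f = sharpPos tf'.f :=
        congrArg (fun p => p.2.2) htriple
      have hletf : TF.le tf tf' := by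
        refine ⟨hsrc, hdst, ?_⟩
        intro q q'
        have hsp : (tf.f q q').isNone = (tf'.f q q').isNone :=
          congrFun (congrFun (congrArg (fun g => g) hsharp) q) q'
        cases hfv : tf.f q q' with
        | none =>
          rw [hfv] at hsp
          have : tf'.f q q' = none := by
            cases h' : tf'.f q q' with
            | none => rfl
            | some m => rw [h'] at hsp; simp at hsp
          rw [this]
          trivial
        | some n =>
          rw [hfv] at hsp
          cases h' : tf'.f q q' with
          | none => rw [h'] at hsp; simp at hsp
          | some m =>
            show NS.le (some n) (some m)
            show n ≤ m
            have h1 := hu1 q q' n hfv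
            have h2 := hv1 q q' m h'
            have := hle (Sum.inl (q, q'))
            omega
      have htf' : tf' ∈ TBounded Tr k := TBounded_upward Tr k htf hletf
      simp only [chiSet, Set.mem_iUnion]
      exact ⟨tf', htf', hv1, hv2, hv3⟩
  · intro hv
    simp only [chiSet, Set.mem_iUnion] at hv
    obtain ⟨tf, htf, hchi⟩ := hv
    refine ⟨⟨v, Or.inl ?_, fun i => le_refl _⟩, ?_⟩
    · simp only [chiSet, Set.mem_iUnion]
      exact ⟨tf, htf, hchi⟩
    · simp only [chiSet, Set.mem_iUnion]
      exact ⟨tf, Set.mem_univ tf, hchi⟩
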